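/- arXiv:2508.02713 — 2 statements merged into one kernel-verified Lean document; each statement's English description precedes it below -/
import Mathlib

section
/- Let L and n be positive integers, let ρ ∈ ℝ^L with ρ_l > 0 for every l, and let the mass matrix be M = m·I_{Ln} with m > 0. Let p̂, q̂ ∈ ℝ^{Ln} be block vectors whose blocks satisfy the power constraints p̂_l^T p̂_l = ρ_l for all l ∈ {1,…,L}, and let v ∈ ℝ^{Ln} be an arbitrary vector (representing the gradient ∇g(p̂) of the objective). Set C = diag(ρ_1,…,ρ_L) and Q = Q(q̂) = vecdiag(q̂_1^T,…,q̂_L^T). Then the Lagrange multiplier vector λ = C^{-1} ( M^{-1} Q q̂ − M G(p̂) M^{-1} v ) ∈ ℝ^L satisfies the hidden-constraint equation M^{-2} Q q̂ − G(p̂) M^{-1} ( v + G(p̂)^T λ ) = 0. -/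
open Matrix

/-- The constraint Jacobian `G(p̂) = vecdiag(p̂₁ᵀ,…,p̂_Lᵀ)`: the `L × Ln`
block-diagonal matrix whose entry in row `l` and column `(l', j)` equals
`p̂_{l',j}` if `l' = l` and `0` otherwise. -/
def Gmat {L n : ℕ} (p : Fin L × Fin n → ℝ) :
    Matrix (Fin L) (Fin L × Fin n) ℝ :=
  fun l lj => if lj.1 = l then p lj else 0

lemma Gmat_mulVec {L n : ℕ} (p x : Fin L × Fin n → ℝ) (l : Fin L) :
    (Gmat p *ᵥ x) l = ∑ j, p (l, j) * x (l, j) := by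
  simp only [mulVec, dotProduct, Gmat]
  rw [Fintype.sum_prod_type]
  rw [Finset.sum_eq_single l]
  · simp
  · intro b _ hb; simp [hb]
  · simp

lemma GmatT_mulVec {L n : ℕ} (p : Fin L × Fin n → ℝ) (lam : Fin L → ℝ)
    (lj : Fin L × Fin n) :
    ((Gmat p)ᵀ *ᵥ lam) lj = p lj * lam lj.1 := by
  simp only [mulVec, dotProduct, transpose_apply, Gmat]
  rw [Finset.sum_eq_single lj.1] <;> simp +contextual [eq_comm]

theorem stmt0 (L n : ℕ) (hL : 0 < L) (hn : 0 < n) (ρ : Fin L → ℝ)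
    (hρ : ∀ l, 0 < ρ l) (m : ℝ) (hm : 0 < m)
    (p q v : Fin L × Fin n → ℝ)
    (hp : ∀ l, ∑ j, p (l, j) * p (l, j) = ρ l)
    (lam : Fin L → ℝ)
    (hlam : lam = (Matrix.diagonal ρ)⁻¹ *ᵥ
      (m⁻¹ • (Gmat q *ᵥ q) - m • (Gmat p *ᵥ (m⁻¹ • v)))) :
    (m⁻¹ * m⁻¹) • (Gmat q *ᵥ q)
      - Gmat p *ᵥ (m⁻¹ • (v + (Gmat p)ᵀ *ᵥ lam)) = 0 := by
  have hdi : (Matrix.diagonal ρ)⁻¹ = Matrix.diagonal (ρ⁻¹) := by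
    apply Matrix.inv_eq_right_inv
    rw [Matrix.diagonal_mul_diagonal]
    convert Matrix.diagonal_one with l
    exact mul_inv_cancel₀ (hρ l).ne'
  have hlaml : ∀ l, lam l =
      (ρ l)⁻¹ * (m⁻¹ * (∑ j, q (l, j) * q (l, j)) - (∑ j, p (l, j) * v (l, j))) := by
    intro l
    rw [hlam, hdi]
    simp only [mulVec_diagonal, Pi.sub_apply, Pi.smul_apply, smul_eq_mul,
      Pi.inv_apply]
    simp only [Gmat_mulVec]
    have : ∑ j, p (l, j) * (m⁻¹ • v) (l, j) = m⁻¹ * ∑ j, p (l, j) * v (l, j) := by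
      rw [Finset.mul_sum]; congr 1; funext j; simp; ring
    rw [this]
    field_simp
  funext l
  simp only [Pi.sub_apply, Pi.smul_apply, Pi.zero_apply, smul_eq_mul]
  simp only [Gmat_mulVec]
  have key : ∀ j : Fin n, p (l, j) * (m⁻¹ • (v + (Gmat p)ᵀ *ᵥ lam)) (l, j)
      = m⁻¹ * (p (l, j) * v (l, j) + p (l, j) * p (l, j) * lam l) := by
    intro j
    simp only [Pi.smul_apply, Pi.add_apply, smul_eq_mul]
    rw [GmatT_mulVec]
    ring
  rw [Finset.sum_congr rfl (fun j _ => key j), ← Finset.mul_sum,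
    Finset.sum_add_distrib, ← Finset.sum_mul, hp l, hlaml l]
  have hρl := (hρ l).ne'
  field_simp
  ring
end

section
/- Let L and n be positive integers, let ρ ∈ ℝ^L with ρ_l > 0 for every l, let h > 0 and γ ∈ ℝ. Let p̂ ∈ ℝ^{Ln} be a block vector whose blocks satisfy p̂_l^T p̂_l = ρ_l for all l, let q̂_{1/2} ∈ ℝ^{Ln} (the half-step momentum) and v ∈ ℝ^{Ln} (representing ∇g(p̂)) be arbitrary, and set C = diag(ρ_1,…,ρ_L). Define μ = C^{-1} ( 2 G(p̂) q̂_{1/2} − h G(p̂) v ) / h ∈ ℝ^L. Then the updated momentum q̂⁺ := e^{−γ h / 2} ( q̂_{1/2} − (h/2)( v + G(p̂)^T μ ) ) satisfies the momentum-level constraint G(p̂) q̂⁺ = 0. -/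
open Matrix

theorem stmt1 (L n : ℕ) (hL : 0 < L) (hn : 0 < n) (ρ : Fin L → ℝ)
    (hρ : ∀ l, 0 < ρ l) (h γ : ℝ) (hh : 0 < h)
    (p qhalf v : Fin L × Fin n → ℝ)
    (hp : ∀ l, ∑ j, p (l, j) * p (l, j) = ρ l)
    (μ : Fin L → ℝ)
    (hμ : μ = (Matrix.diagonal ρ)⁻¹ *ᵥ
      (h⁻¹ • ((2 : ℝ) • (Gmat p *ᵥ qhalf) - h • (Gmat p *ᵥ v)))) :
    Gmat p *ᵥ (Real.exp (-γ * h / 2) •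
      (qhalf - (h / 2) • (v + (Gmat p)ᵀ *ᵥ μ))) = 0 := by
  have hinv : (Matrix.diagonal ρ)⁻¹ = Matrix.diagonal (fun i => (ρ i)⁻¹) := by
    apply Matrix.inv_eq_right_inv
    rw [Matrix.diagonal_mul_diagonal]
    convert Matrix.diagonal_one using 2
    exact funext fun i => mul_inv_cancel₀ (hρ i).ne'
  rw [hinv] at hμ
  funext l
  -- key: (Gmat p *ᵥ x) l = ∑ j, p (l,j) * x (l,j)
  have key : ∀ x : Fin L × Fin n → ℝ,
      (Gmat p *ᵥ x) l = ∑ j, p (l, j) * x (l, j) := by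
    intro x
    simp only [Matrix.mulVec, dotProduct, Gmat]
    rw [Fintype.sum_prod_type, Finset.sum_eq_single l]
    · simp
    · intro b _ hb; simp [hb]
    · simp
  -- value of μ at l
  have hμl : μ l = (ρ l)⁻¹ * (h⁻¹ * (2 * (∑ j, p (l, j) * qhalf (l, j))
      - h * (∑ j, p (l, j) * v (l, j)))) := by
    rw [hμ]
    simp only [Matrix.mulVec_diagonal, Pi.smul_apply, Pi.sub_apply, smul_eq_mul, key]
  -- Gᵀ μ at (l, j)
  have htr : ∀ j, ((Gmat p)ᵀ *ᵥ μ) (l, j) = p (l, j) * μ l := by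
    intro j
    simp only [Matrix.mulVec, dotProduct, Matrix.transpose_apply, Gmat]
    rw [Finset.sum_eq_single l]
    · simp
    · intro b _ hb; simp [Ne.symm hb]
    · simp
  rw [key]
  have expand : ∀ j, p (l, j) * (Real.exp (-γ * h / 2) •
      (qhalf - (h / 2) • (v + (Gmat p)ᵀ *ᵥ μ))) (l, j)
      = Real.exp (-γ * h / 2) * (p (l, j) * qhalf (l, j)
        - h / 2 * (p (l, j) * v (l, j)) - h / 2 * μ l * (p (l, j) * p (l, j))) := by
    intro j
    simp only [Pi.smul_apply, Pi.sub_apply, Pi.add_apply, smul_eq_mul, htr j]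
    ring
  simp only [expand]
  rw [← Finset.mul_sum, Finset.sum_sub_distrib, Finset.sum_sub_distrib,
    ← Finset.mul_sum, ← Finset.mul_sum, hp l, hμl, Pi.zero_apply]
  have : ρ l ≠ 0 := (hρ l).ne'
  have : h ≠ 0 := hh.ne'
  field_simp
  ring
end
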